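/- arXiv:2209.13480 — 3 statements merged into one kernel-verified Lean document; each statement's English description precedes it below -/
import Mathlib

section
/- Let M be a centered Gaussian field on ℝ₊² with covariance E[M(u)M(v)] = (u1∧v1)(u2∧v2)(u1∨v1 + u2∨v2), and for a rectangle A = [a1,b1)×[a2,b2) define the increment M(A) = M(b1,b2) − M(a1,b2) − M(b1,a2) + M(a1,a2). Then for real numbers u0 ≤ u1 and s0 ≤ s1 ≤ t0 ≤ t1, with A = [u0,u1)×[s0,s1) and B = [u0,u1)×[t0,t1), one has E[M(A)·M(B)] = (u1−u0)(s1−s0)(t1−t0). -/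
open MeasureTheory

theorem stmt_5 {Ω : Type*} [MeasurableSpace Ω] (μ : Measure Ω) [IsProbabilityMeasure μ]
    (M : ℝ × ℝ → Ω → ℝ)
    (hL2 : ∀ u v : ℝ × ℝ, Integrable (fun w => M u w * M v w) μ)
    (hcentered : ∀ u : ℝ × ℝ, 0 ≤ u.1 → 0 ≤ u.2 → ∫ w, M u w ∂μ = 0)
    (hcov : ∀ u v : ℝ × ℝ, 0 ≤ u.1 → 0 ≤ u.2 → 0 ≤ v.1 → 0 ≤ v.2 →
      ∫ w, M u w * M v w ∂μ
        = min u.1 v.1 * min u.2 v.2 * (max u.1 v.1 + max u.2 v.2))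
    (u0 u1 s0 s1 t0 t1 : ℝ)
    (hu0 : 0 ≤ u0) (hu : u0 ≤ u1) (hs0 : 0 ≤ s0)
    (hs : s0 ≤ s1) (hst : s1 ≤ t0) (ht : t0 ≤ t1) :
    ∫ w, (M (u1, s1) w - M (u0, s1) w - M (u1, s0) w + M (u0, s0) w)
        * (M (u1, t1) w - M (u0, t1) w - M (u1, t0) w + M (u0, t0) w) ∂μ
      = (u1 - u0) * (s1 - s0) * (t1 - t0) := by
  have hu1 : 0 ≤ u1 := hu0.trans hu
  have hs1 : 0 ≤ s1 := hs0.trans hs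
  have ht0' : 0 ≤ t0 := hs1.trans hst
  have ht1' : 0 ≤ t1 := ht0'.trans ht
  set B : Ω → ℝ := fun w => M (u1, t1) w - M (u0, t1) w - M (u1, t0) w + M (u0, t0) w with hB
  have hgI : ∀ p : ℝ × ℝ, Integrable (fun w => M p w * B w) μ := by
    intro p
    have : (fun w => M p w * B w)
        = fun w => M p w * M (u1, t1) w - M p w * M (u0, t1) w
            - M p w * M (u1, t0) w + M p w * M (u0, t0) w := by
      funext w; simp only [hB]; ring
    rw [this]
    exact (((hL2 p (u1, t1)).sub (hL2 p (u0, t1))).sub (hL2 p (u1, t0))).add (hL2 p (u0, t0))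
  have hgval : ∀ p : ℝ × ℝ, ∫ w, M p w * B w ∂μ
      = (∫ w, M p w * M (u1, t1) w ∂μ) - (∫ w, M p w * M (u0, t1) w ∂μ)
        - (∫ w, M p w * M (u1, t0) w ∂μ) + (∫ w, M p w * M (u0, t0) w ∂μ) := by
    intro p
    have heq : (fun w => M p w * B w)
        = fun w => M p w * M (u1, t1) w - M p w * M (u0, t1) w
            - M p w * M (u1, t0) w + M p w * M (u0, t0) w := by
      funext w; simp only [hB]; ring
    have h2 : Integrable (fun w => M p w * M (u1, t1) w - M p w * M (u0, t1) w) μ :=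
      (hL2 p (u1, t1)).sub (hL2 p (u0, t1))
    have h3 : Integrable
        (fun w => M p w * M (u1, t1) w - M p w * M (u0, t1) w - M p w * M (u1, t0) w) μ :=
      h2.sub (hL2 p (u1, t0))
    rw [heq, integral_add h3 (hL2 p (u0, t0)), integral_sub h2 (hL2 p (u1, t0)),
      integral_sub (hL2 p (u1, t1)) (hL2 p (u0, t1))]
  have hmain : (fun w => (M (u1, s1) w - M (u0, s1) w - M (u1, s0) w + M (u0, s0) w) * B w)
      = fun w => M (u1, s1) w * B w - M (u0, s1) w * B w - M (u1, s0) w * B w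
          + M (u0, s0) w * B w := by
    funext w; ring
  calc ∫ w, (M (u1, s1) w - M (u0, s1) w - M (u1, s0) w + M (u0, s0) w) * B w ∂μ
      = (∫ w, M (u1, s1) w * B w ∂μ) - (∫ w, M (u0, s1) w * B w ∂μ)
        - (∫ w, M (u1, s0) w * B w ∂μ) + (∫ w, M (u0, s0) w * B w ∂μ) := by
        have k2 : Integrable (fun w => M (u1, s1) w * B w - M (u0, s1) w * B w) μ :=
          (hgI (u1, s1)).sub (hgI (u0, s1))
        have k3 : Integrable
            (fun w => M (u1, s1) w * B w - M (u0, s1) w * B w - M (u1, s0) w * B w) μ :=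
          k2.sub (hgI (u1, s0))
        rw [hmain, integral_add k3 (hgI (u0, s0)), integral_sub k2 (hgI (u1, s0)),
          integral_sub (hgI (u1, s1)) (hgI (u0, s1))]
    _ = (u1 - u0) * (s1 - s0) * (t1 - t0) := by
        rw [hgval (u1, s1), hgval (u0, s1), hgval (u1, s0), hgval (u0, s0)]
        rw [hcov (u1, s1) (u1, t1) hu1 hs1 hu1 ht1', hcov (u1, s1) (u0, t1) hu1 hs1 hu0 ht1',
          hcov (u1, s1) (u1, t0) hu1 hs1 hu1 ht0', hcov (u1, s1) (u0, t0) hu1 hs1 hu0 ht0',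
          hcov (u0, s1) (u1, t1) hu0 hs1 hu1 ht1', hcov (u0, s1) (u0, t1) hu0 hs1 hu0 ht1',
          hcov (u0, s1) (u1, t0) hu0 hs1 hu1 ht0', hcov (u0, s1) (u0, t0) hu0 hs1 hu0 ht0',
          hcov (u1, s0) (u1, t1) hu1 hs0 hu1 ht1', hcov (u1, s0) (u0, t1) hu1 hs0 hu0 ht1',
          hcov (u1, s0) (u1, t0) hu1 hs0 hu1 ht0', hcov (u1, s0) (u0, t0) hu1 hs0 hu0 ht0',
          hcov (u0, s0) (u1, t1) hu0 hs0 hu1 ht1', hcov (u0, s0) (u0, t1) hu0 hs0 hu0 ht1',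
          hcov (u0, s0) (u1, t0) hu0 hs0 hu1 ht0', hcov (u0, s0) (u0, t0) hu0 hs0 hu0 ht0']
        simp only [min_self, max_self,
          min_eq_left hu, max_eq_right hu, min_eq_right hu, max_eq_left hu,
          min_eq_left (hs.trans (hst.trans ht)), max_eq_right (hs.trans (hst.trans ht)),
          min_eq_left (hs.trans hst), max_eq_right (hs.trans hst),
          min_eq_left (hst.trans ht), max_eq_right (hst.trans ht),
          min_eq_left hst, max_eq_right hst]
        ring
end

section
/- Let α ∈ (0, 1/2] and t1, t2 > 0. Then ∫_0^{t2}∫_0^{t1} s1^{α−1}·(s1+s2)^{α−2} ds1 ds2 = +∞. -/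
open MeasureTheory

lemma aux_rpow_top {r ε : ℝ} (hr : r ≤ -1) (hε : 0 < ε) :
    ∫⁻ x in Set.Ioo (0 : ℝ) ε, ENNReal.ofReal (x ^ r) = ⊤ := by
  by_contra h
  have hm : Measurable fun x : ℝ => x ^ r := by measurability
  have hint : MeasureTheory.IntegrableOn (fun x : ℝ => x ^ r) (Set.Ioo 0 ε) := by
    constructor
    · exact hm.aestronglyMeasurable
    · rw [hasFiniteIntegral_iff_ofReal]
      · exact lt_top_iff_ne_top.2 h
      · filter_upwards [ae_restrict_mem measurableSet_Ioo] with x hx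
        exact Real.rpow_nonneg hx.1.le r
  rw [intervalIntegral.integrableOn_Ioo_rpow_iff hε] at hint
  linarith

theorem stmt_9 (α t1 t2 : ℝ) (hα1 : 0 < α) (hα2 : α ≤ 1 / 2) (ht1 : 0 < t1) (ht2 : 0 < t2) :
    ∫⁻ s in Set.Ioo 0 t1 ×ˢ Set.Ioo 0 t2,
        ENNReal.ofReal (s.1 ^ (α - 1) * (s.1 + s.2) ^ (α - 2)) = ⊤ := by
  set ε := min t1 t2 with hεdef
  have hε0 : 0 < ε := lt_min ht1 ht2
  have hεt1 : ε ≤ t1 := min_le_left _ _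
  have hεt2 : ε ≤ t2 := min_le_right _ _
  have hmeas : Measurable fun s : ℝ × ℝ =>
      ENNReal.ofReal (s.1 ^ (α - 1) * (s.1 + s.2) ^ (α - 2)) := by
    measurability
  rw [Measure.volume_eq_prod, ← Measure.prod_restrict,
    MeasureTheory.lintegral_prod _ hmeas.aemeasurable]
  rw [eq_top_iff]
  have key : ∀ x ∈ Set.Ioo (0 : ℝ) ε,
      ENNReal.ofReal (2 ^ (α - 2)) * ENNReal.ofReal (x ^ (2 * α - 2)) ≤
        ∫⁻ y in Set.Ioo (0 : ℝ) t2,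
          ENNReal.ofReal (x ^ (α - 1) * (x + y) ^ (α - 2)) := by
    intro x hx
    obtain ⟨hx0, hxε⟩ := hx
    have h1 : x ^ (2 * α - 2) = x * x ^ (2 * α - 3) := by
      rw [show (2 * α - 2 : ℝ) = 1 + (2 * α - 3) by ring, Real.rpow_add hx0,
        Real.rpow_one]
    calc ENNReal.ofReal (2 ^ (α - 2)) * ENNReal.ofReal (x ^ (2 * α - 2))
        = ENNReal.ofReal (2 ^ (α - 2) * x ^ (2 * α - 3)) * ENNReal.ofReal x := by
          rw [h1, ← ENNReal.ofReal_mul (by positivity), ← ENNReal.ofReal_mul (by positivity)]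
          ring_nf
      _ = ∫⁻ _ in Set.Ioo (0 : ℝ) x, ENNReal.ofReal (2 ^ (α - 2) * x ^ (2 * α - 3)) := by
          rw [setLIntegral_const, Real.volume_Ioo, sub_zero]
      _ ≤ ∫⁻ y in Set.Ioo (0 : ℝ) x,
            ENNReal.ofReal (x ^ (α - 1) * (x + y) ^ (α - 2)) := by
          apply setLIntegral_mono' measurableSet_Ioo
          intro y hy
          apply ENNReal.ofReal_le_ofReal
          have h2 : (2 * x) ^ (α - 2) ≤ (x + y) ^ (α - 2) :=
            Real.rpow_le_rpow_of_nonpos (by linarith [hy.1]) (by linarith [hy.2])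
              (by linarith)
          calc 2 ^ (α - 2) * x ^ (2 * α - 3)
              = x ^ (α - 1) * (2 * x) ^ (α - 2) := by
                rw [Real.mul_rpow (by norm_num) hx0.le,
                  show (2 * α - 3 : ℝ) = (α - 1) + (α - 2) by ring,
                  Real.rpow_add hx0]
                ring
            _ ≤ x ^ (α - 1) * (x + y) ^ (α - 2) := by
                have := Real.rpow_nonneg hx0.le (α - 1)
                nlinarith
      _ ≤ ∫⁻ y in Set.Ioo (0 : ℝ) t2,
            ENNReal.ofReal (x ^ (α - 1) * (x + y) ^ (α - 2)) :=
          lintegral_mono_set (Set.Ioo_subset_Ioo le_rfl (le_trans hxε.le hεt2))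
  calc (⊤ : ENNReal)
      = ENNReal.ofReal (2 ^ (α - 2)) * ∫⁻ x in Set.Ioo (0 : ℝ) ε,
          ENNReal.ofReal (x ^ (2 * α - 2)) := by
        rw [aux_rpow_top (by linarith) hε0, ENNReal.mul_top]
        simp only [ne_eq, ENNReal.ofReal_eq_zero, not_le]
        positivity
    _ = ∫⁻ x in Set.Ioo (0 : ℝ) ε,
          ENNReal.ofReal (2 ^ (α - 2)) * ENNReal.ofReal (x ^ (2 * α - 2)) :=
        (lintegral_const_mul _ (ENNReal.measurable_ofReal.comp
          (by measurability))).symm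
    _ ≤ ∫⁻ x in Set.Ioo (0 : ℝ) ε, ∫⁻ y in Set.Ioo (0 : ℝ) t2,
          ENNReal.ofReal (x ^ (α - 1) * (x + y) ^ (α - 2)) :=
        setLIntegral_mono' measurableSet_Ioo key
    _ ≤ ∫⁻ x in Set.Ioo (0 : ℝ) t1, ∫⁻ y in Set.Ioo (0 : ℝ) t2,
          ENNReal.ofReal (x ^ (α - 1) * (x + y) ^ (α - 2)) :=
        lintegral_mono_set (Set.Ioo_subset_Ioo le_rfl hεt1)
end

section
/- Let S be the semiring of half-open boxes [u, v) in ℝ^k (together with the empty set), and let ν : S → ℝ be nonnegative, finitely additive, and satisfy ν([−m,m)^k) < ∞ for all m > 0. Suppose there exists a measure μ on the Borel σ-algebra of ℝ^k, finite on bounded boxes, such that ν(A) ≤ μ(A) for all A ∈ S. Then ν is countably additive on S, and hence extends uniquely to a σ-finite Borel measure on ℝ^k. -/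
open MeasureTheory Set

/-- The semiring of half-open boxes `[u, v)` in `ℝ^k`, together with the empty set. -/
def Box (k : ℕ) : Set (Set (Fin k → ℝ)) :=
  {A | A = ∅ ∨ ∃ u v : Fin k → ℝ, A = Set.univ.pi fun i => Set.Ico (u i) (v i)}

lemma box_empty (k : ℕ) : (∅ : Set (Fin k → ℝ)) ∈ Box k := Or.inl rfl

lemma box_mk (k : ℕ) (u v : Fin k → ℝ) :
    (Set.univ.pi fun i => Set.Ico (u i) (v i)) ∈ Box k := Or.inr ⟨u, v, rfl⟩

lemma box_inter {k : ℕ} {s t : Set (Fin k → ℝ)} (hs : s ∈ Box k) (ht : t ∈ Box k) :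
    s ∩ t ∈ Box k := by
  rcases hs with rfl | ⟨u, v, rfl⟩
  · simpa using box_empty k
  rcases ht with rfl | ⟨a, b, rfl⟩
  · simpa using box_empty k
  refine Or.inr ⟨fun i => u i ⊔ a i, fun i => v i ⊓ b i, ?_⟩
  rw [← Set.pi_inter_distrib]
  simp [Set.Ico_inter_Ico]

/-- The difference of two boxes is a finite disjoint union of boxes. -/
lemma box_diff {k : ℕ} {s t : Set (Fin k → ℝ)} (hs : s ∈ Box k) (ht : t ∈ Box k) :
    ∃ I : Finset (Set (Fin k → ℝ)), ↑I ⊆ Box k ∧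
      (I : Set (Set (Fin k → ℝ))).PairwiseDisjoint id ∧ s \ t = ⋃₀ ↑I := by
  classical
  rcases hs with rfl | ⟨u, v, rfl⟩
  · exact ⟨∅, by simp, by simp, by simp⟩
  set s : Set (Fin k → ℝ) := Set.univ.pi fun i => Set.Ico (u i) (v i) with hs_def
  by_cases hst : s ∩ t = ∅
  · refine ⟨{s}, by simpa [hs_def] using box_mk k u v, by simp, ?_⟩
    simp only [Finset.coe_singleton, sUnion_singleton]
    ext x
    simp only [Set.mem_diff, and_iff_left_iff_imp]
    intro hx hxt
    exact Set.eq_empty_iff_forall_notMem.mp hst x ⟨hx, hxt⟩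
  rcases ht with rfl | ⟨a, b, rfl⟩
  · simp at hst
  -- both boxes, with nonempty intersection
  obtain ⟨z, hz⟩ := Set.nonempty_iff_ne_empty.mpr hst
  set c : Fin k → ℝ := fun i => a i ⊔ u i with hc
  set d : Fin k → ℝ := fun i => b i ⊓ v i with hd
  have hzs : ∀ i, u i ≤ z i ∧ z i < v i := by
    intro i
    have := hz.1 i (Set.mem_univ i); simpa using this
  have hzt : ∀ i, a i ≤ z i ∧ z i < b i := by
    intro i
    have := hz.2 i (Set.mem_univ i); simpa using this
  have hcd : ∀ i, c i < d i := fun i =>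
    lt_min (lt_of_le_of_lt (sup_le (hzt i).1 (hzs i).1) (hzt i).2)
      (lt_of_le_of_lt (sup_le (hzt i).1 (hzs i).1) (hzs i).2) |>.trans_le le_rfl
  have huc : ∀ i, u i ≤ c i := fun i => le_sup_right
  have hdv : ∀ i, d i ≤ v i := fun i => inf_le_right
  -- the pieces
  set L : Fin k → Bool → Fin k → ℝ := fun j e i =>
    if i < j then c i else if i = j then (if e then u i else d i) else u i with hL
  set R : Fin k → Bool → Fin k → ℝ := fun j e i =>
    if i < j then d i else if i = j then (if e then c i else v i) else v i with hR
  set piece : Fin k → Bool → Set (Fin k → ℝ) := fun j e =>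
    Set.univ.pi fun i => Set.Ico (L j e i) (R j e i) with hpiece
  have piece_box : ∀ j e, piece j e ∈ Box k := fun j e => box_mk k (L j e) (R j e)
  -- membership description
  have piece_mem : ∀ j e x, x ∈ piece j e ↔
      (∀ i, i < j → x i ∈ Set.Ico (c i) (d i)) ∧
      (x j ∈ Set.Ico (if e then u j else d j) (if e then c j else v j)) ∧
      (∀ i, j < i → x i ∈ Set.Ico (u i) (v i)) := by
    intro j e x
    constructor
    · intro hx
      refine ⟨fun i hi => ?_, ?_, fun i hi => ?_⟩
      · have := hx i (Set.mem_univ i); simp only [hL, hR, if_pos hi] at this; exact this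
      · have := hx j (Set.mem_univ j)
        simp only [hL, hR, lt_irrefl, if_neg (lt_irrefl j), if_pos rfl] at this
        cases e <;> simpa using this
      · have := hx i (Set.mem_univ i)
        simp only [hL, hR, if_neg (not_lt_of_gt hi), if_neg (ne_of_gt hi)] at this
        exact this
    · rintro ⟨h1, h2, h3⟩ i _
      simp only [hL, hR]
      rcases lt_trichotomy i j with h | h | h
      · rw [if_pos h, if_pos h]; exact h1 i h
      · subst h
        rw [if_neg (lt_irrefl i), if_neg (lt_irrefl i), if_pos rfl, if_pos rfl]
        cases e <;> simpa using h2
      · rw [if_neg (not_lt_of_gt h), if_neg (not_lt_of_gt h), if_neg (ne_of_gt h),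
          if_neg (ne_of_gt h)]
        exact h3 i h
  -- pieces are pairwise disjoint
  have piece_disj : ∀ (j e j' e'), (j, e) ≠ (j', e') →
      Disjoint (piece j e) (piece j' e') := by
    have key : ∀ (j e j' e'), j < j' → Disjoint (piece j e) (piece j' e') := by
      intro j e j' e' hjj'
      rw [Set.disjoint_left]
      intro x hx hx'
      have h2 := ((piece_mem j e x).mp hx).2.1
      have h1 := ((piece_mem j' e' x).mp hx').1 j hjj'
      cases e
      · simp only [Bool.false_eq_true, if_false] at h2
        exact absurd h1.2 (not_lt_of_ge h2.1)
      · simp only [if_pos rfl] at h2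
        exact absurd h2.2 (not_lt_of_ge h1.1)
    intro j e j' e' hne
    rcases lt_trichotomy j j' with h | h | h
    · exact key j e j' e' h
    · subst h
      have he : e ≠ e' := fun h => hne (by rw [h])
      rw [Set.disjoint_left]
      intro x hx hx'
      have h2 := ((piece_mem j e x).mp hx).2.1
      have h2' := ((piece_mem j e' x).mp hx').2.1
      cases e <;> cases e' <;> simp only [Bool.false_eq_true, if_false, if_pos rfl] at h2 h2'
      · exact he rfl
      · exact absurd h2'.2 (not_lt_of_ge (le_trans (hcd j).le h2.1))
      · exact absurd h2.2 (not_lt_of_ge (le_trans (hcd j).le h2'.1))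
      · exact he rfl
    · exact (key j' e' j e h).symm
  -- the union of the pieces is s \ t
  have piece_union : s \ (Set.univ.pi fun i => Set.Ico (a i) (b i)) = ⋃ p : Fin k × Bool, piece p.1 p.2 := by
    ext x
    simp only [Set.mem_diff, Set.mem_iUnion]
    constructor
    · rintro ⟨hxs, hxt⟩
      have hxs' : ∀ i, u i ≤ x i ∧ x i < v i := by
        intro i; have := hxs i (Set.mem_univ i); simpa using this
      classical
      set P : Fin k → Prop := fun i => x i < c i ∨ d i ≤ x i with hP
      have hbad : (Finset.univ.filter P).Nonempty := by
        by_contra hcon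
        rw [Finset.not_nonempty_iff_eq_empty, Finset.filter_eq_empty_iff] at hcon
        refine hxt fun i _ => ?_
        have hPi := hcon (Finset.mem_univ i)
        simp only [hP] at hPi
        push_neg at hPi
        simp only [Set.mem_Ico]
        exact ⟨le_sup_left.trans hPi.1, lt_of_lt_of_le hPi.2 inf_le_left⟩
      set j := (Finset.univ.filter P).min' hbad with hj
      have hPj : P j := (Finset.mem_filter.mp ((Finset.univ.filter P).min'_mem hbad)).2
      have hmin : ∀ i, i < j → ¬ P i := by
        intro i hij hPi
        exact absurd ((Finset.univ.filter P).min'_le i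
          (Finset.mem_filter.mpr ⟨Finset.mem_univ i, hPi⟩)) (not_le_of_gt hij)
      refine ⟨⟨j, if x j < c j then true else false⟩, (piece_mem _ _ x).mpr ⟨?_, ?_, ?_⟩⟩
      · intro i hij
        have := hmin i hij
        simp only [hP] at this
        push_neg at this
        exact ⟨this.1, this.2⟩
      · by_cases hcase : x j < c j
        · simp only [if_pos hcase]
          exact ⟨(hxs' j).1, hcase⟩
        · simp only [if_neg hcase, Bool.false_eq_true, if_false]
          rcases hPj with h | h
          · exact absurd h hcase
          · exact ⟨h, (hxs' j).2⟩
      · intro i _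
        exact Set.mem_Ico.mpr ⟨(hxs' i).1, (hxs' i).2⟩
    · rintro ⟨⟨j, e⟩, hx⟩
      obtain ⟨h1, h2, h3⟩ := (piece_mem j e x).mp hx
      have hxs : x ∈ s := by
        intro i _
        simp only [Set.mem_Ico]
        rcases lt_trichotomy i j with h | h | h
        · exact ⟨(huc i).trans (h1 i h).1, lt_of_lt_of_le (h1 i h).2 (hdv i)⟩
        · subst h
          cases e
          · simp only [if_neg Bool.false_ne_true] at h2
            exact ⟨(huc i).trans ((hcd i).le.trans h2.1), h2.2⟩
          · simp only [if_pos rfl] at h2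
            exact ⟨h2.1, lt_of_lt_of_le h2.2 ((hcd i).le.trans (hdv i))⟩
        · exact h3 i h
      refine ⟨hxs, fun hxt => ?_⟩
      have hxj := hxt j (Set.mem_univ j)
      simp only [Set.mem_Ico] at hxj
      cases e
      · simp only [if_neg Bool.false_ne_true] at h2
        -- x j ≥ d j = min (b j) (v j); x j < v j so x j ≥ b j contradiction with x j < b j
        have : x j < d j := lt_min hxj.2 ((hxs j (Set.mem_univ j)).2)
        exact absurd h2.1 (not_le_of_gt this)
      · simp only [if_pos rfl] at h2
        have : c j ≤ x j := sup_le hxj.1 (hxs j (Set.mem_univ j)).1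
        exact absurd h2.2 (not_lt_of_ge this)
  refine ⟨Finset.image (fun p : Fin k × Bool => piece p.1 p.2) Finset.univ, ?_, ?_, ?_⟩
  · intro A hA
    simp only [Finset.coe_image, Set.mem_image] at hA
    obtain ⟨p, _, rfl⟩ := hA
    exact piece_box p.1 p.2
  · intro A hA B hB hAB
    simp only [Finset.coe_image, Set.mem_image] at hA hB
    obtain ⟨p, _, rfl⟩ := hA
    obtain ⟨q, _, rfl⟩ := hB
    have hpq : (p.1, p.2) ≠ (q.1, q.2) := by
      intro h
      apply hAB
      rw [show p = q from Prod.ext (congrArg Prod.fst h) (congrArg Prod.snd h)]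
    exact piece_disj p.1 p.2 q.1 q.2 hpq
  · rw [piece_union]
    rw [Finset.coe_image, Finset.coe_univ, Set.image_univ, Set.sUnion_range]

lemma box_def (k : ℕ) : Box k =
    {A | A = ∅ ∨ ∃ u v : Fin k → ℝ, A = Set.univ.pi fun i => Set.Ico (u i) (v i)} := rfl

lemma box_semiring (k : ℕ) : IsSetSemiring (Box k) :=
  ⟨box_empty k, fun _ hs _ ht => box_inter hs ht, fun _ hs _ ht => box_diff hs ht⟩

lemma box_measurableSet {k : ℕ} {s : Set (Fin k → ℝ)} (hs : s ∈ Box k) : MeasurableSet s := by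
  rw [box_def] at hs
  rcases hs with rfl | ⟨u, v, rfl⟩
  · exact MeasurableSet.empty
  · exact MeasurableSet.univ_pi fun i => measurableSet_Ico

lemma box_generateFrom (k : ℕ) :
    (inferInstance : MeasurableSpace (Fin k → ℝ)) = MeasurableSpace.generateFrom (Box k) := by
  refine le_antisymm ?_ (MeasurableSpace.generateFrom_le fun s hs => box_measurableSet hs)
  have h1 : MeasurableSpace.generateFrom
      (Set.univ.pi '' Set.univ.pi (fun _ : Fin k => {S : Set ℝ | ∃ l u : ℝ, l < u ∧ Ico l u = S}))
      = (MeasurableSpace.pi : MeasurableSpace (Fin k → ℝ)) := by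
    refine generateFrom_eq_pi (fun _ => ?_) (fun _ => ?_)
    · rw [← borel_eq_generateFrom_Ico ℝ]
      exact BorelSpace.measurable_eq.symm
    · refine ⟨fun n => Ico (-(n : ℝ) - 1) (n + 1), fun n => ⟨-(n : ℝ) - 1, n + 1, by linarith, rfl⟩, ?_⟩
      ext x
      simp only [Set.mem_iUnion, Set.mem_Ico, Set.mem_univ, iff_true]
      obtain ⟨n, hn⟩ := exists_nat_ge |x|
      exact ⟨n, by cases abs_le.mp hn with | intro h1 h2 => constructor <;> linarith⟩
  have h2 : (inferInstance : MeasurableSpace (Fin k → ℝ)) = MeasurableSpace.pi := rfl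
  rw [h2, ← h1]
  refine MeasurableSpace.generateFrom_le fun s hs => ?_
  obtain ⟨t, ht, rfl⟩ := hs
  have : ∀ i : Fin k, ∃ l u_ : ℝ, l < u_ ∧ Ico l u_ = t i := fun i => ht i (Set.mem_univ i)
  choose l u_ _ htlu using this
  rw [show t = fun i => Ico (l i) (u_ i) from funext fun i => (htlu i).symm]
  exact MeasurableSpace.measurableSet_generateFrom (box_mk k l u_)

section Content

variable {k : ℕ} {ν : Set (Fin k → ℝ) → ℝ}

/-- The content associated to `ν`. -/
noncomputable def boxContent (ν : Set (Fin k → ℝ) → ℝ) (hν0 : ν ∅ = 0)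
    (hνnn : ∀ A ∈ Box k, 0 ≤ ν A)
    (hνadd : ∀ (n : ℕ) (A : Fin n → Set (Fin k → ℝ)),
      (∀ i, A i ∈ Box k) → Pairwise (Function.onFun Disjoint A) → (⋃ i, A i) ∈ Box k →
      ν (⋃ i, A i) = ∑ i, ν (A i)) : AddContent ENNReal (Box k) where
  toFun := fun s => ENNReal.ofReal (ν s)
  empty' := by simp [hν0]
  sUnion' := by
    intro I h_ss h_dis h_mem
    classical
    set n := I.card with hn
    set e := I.equivFin with he
    set A : Fin n → Set (Fin k → ℝ) := fun i => ((e.symm i : I) : Set (Fin k → ℝ)) with hA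
    have hU : ⋃ i, A i = ⋃₀ ↑I := by
      ext x
      simp only [Set.mem_iUnion, Set.mem_sUnion, Finset.mem_coe, hA]
      constructor
      · rintro ⟨i, hx⟩; exact ⟨_, (e.symm i).2, hx⟩
      · rintro ⟨s, hs, hx⟩; exact ⟨e ⟨s, hs⟩, by simpa using hx⟩
    have hAbox : ∀ i, A i ∈ Box k := fun i => h_ss (e.symm i).2
    have hAdisj : Pairwise (Function.onFun Disjoint A) := by
      intro i j hij
      have h1 : ((e.symm i : I) : Set (Fin k → ℝ)) ≠ ((e.symm j : I) : Set (Fin k → ℝ)) := by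
        intro h
        exact hij (e.symm.injective (Subtype.ext h) ▸ rfl)
      exact h_dis (e.symm i).2 (e.symm j).2 h1
    have hkey := hνadd n A hAbox hAdisj (hU ▸ h_mem)
    rw [hU] at hkey
    show ENNReal.ofReal (ν (⋃₀ ↑I)) = ∑ u ∈ I, ENNReal.ofReal (ν u)
    rw [hkey, ENNReal.ofReal_sum_of_nonneg (fun i _ => hνnn _ (hAbox i)),
      ← Finset.sum_coe_sort I (fun s => ENNReal.ofReal (ν s))]
    exact Equiv.sum_comp e.symm (fun t : I => ENNReal.ofReal (ν (t : Set (Fin k → ℝ))))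

end Content

section Sigma

variable {k : ℕ} {μ : Measure (Fin k → ℝ)} {m : AddContent ENNReal (Box k)}

/-- Sum of content over finitely many disjoint sub-boxes is at most the content of the box. -/
lemma box_sum_le (m : AddContent ENNReal (Box k)) {S : Set (Fin k → ℝ)} (hS : S ∈ Box k)
    (A : ℕ → Set (Fin k → ℝ)) (hA : ∀ i, A i ∈ Box k) (hd : Pairwise (Function.onFun Disjoint A))
    (hsub : ∀ i, A i ⊆ S) (s : Finset ℕ) : ∑ i ∈ s, m (A i) ≤ m S := by
  classical
  set J : Finset (Set (Fin k → ℝ)) := (s.filter (fun i => A i ≠ ∅)).image A with hJ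
  have hinj : Set.InjOn A (s.filter (fun i => A i ≠ ∅)) := by
    intro i hi j hj hij
    by_contra hne
    have := hd hne
    rw [Function.onFun, hij] at this
    exact (Finset.mem_filter.mp hj).2 (by simpa using disjoint_self.mp this)
  have hsum : ∑ B ∈ J, m B = ∑ i ∈ s, m (A i) := by
    rw [hJ, Finset.sum_image (fun i hi j hj h => hinj hi hj h)]
    refine Finset.sum_filter_of_ne fun i _ h => ?_
    intro hAi
    exact h (by rw [hAi, addContent_empty])
  rw [← hsum]
  refine sum_addContent_le_of_subset (box_semiring k) ?_ ?_ hS ?_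
  · intro B hB
    simp only [hJ, Finset.coe_image, Set.mem_image, Finset.mem_coe] at hB
    obtain ⟨i, _, rfl⟩ := hB
    exact hA i
  · intro B hB B' hB' hne
    simp only [hJ, Finset.coe_image, Set.mem_image, Finset.mem_coe] at hB hB'
    obtain ⟨i, _, rfl⟩ := hB
    obtain ⟨j, _, rfl⟩ := hB'
    exact hd fun h => hne (by rw [h])
  · intro B hB
    simp only [hJ, Finset.mem_image] at hB
    obtain ⟨i, _, rfl⟩ := hB
    exact hsub i

lemma box_bounded {S : Set (Fin k → ℝ)} (hS : S ∈ Box k) :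
    ∃ n : ℕ, S ⊆ Set.univ.pi fun _ => Set.Ico (-(n : ℝ)) n := by
  rw [box_def] at hS
  rcases hS with rfl | ⟨u, v, rfl⟩
  · exact ⟨0, by simp⟩
  obtain ⟨n, hn⟩ := exists_nat_ge (∑ i, (|u i| + |v i|))
  refine ⟨n, fun x hx i _ => ?_⟩
  have hxi := hx i (Set.mem_univ i)
  simp only [Set.mem_Ico] at hxi ⊢
  have hterm : |u i| + |v i| ≤ ∑ j, (|u j| + |v j|) :=
    Finset.single_le_sum (f := fun j => |u j| + |v j|) (fun j _ => by positivity) (Finset.mem_univ i)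
  have h1 : |u i| ≤ (n : ℝ) := by
    have := abs_nonneg (v i); linarith
  have h2 : |v i| ≤ (n : ℝ) := by
    have := abs_nonneg (u i); linarith
  constructor
  · linarith [neg_abs_le (u i), hxi.1]
  · linarith [le_abs_self (v i), hxi.2]

lemma box_measure_lt_top (hμfin : ∀ n : ℕ, μ (Set.univ.pi fun _ => Set.Ico (-(n : ℝ)) n) < ⊤)
    {S : Set (Fin k → ℝ)} (hS : S ∈ Box k) : μ S < ⊤ := by
  obtain ⟨n, hn⟩ := box_bounded hS
  exact lt_of_le_of_lt (measure_mono hn) (hμfin n)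

/-- countable additivity for ℕ-indexed families. -/
lemma box_sigma_additive
    (hμfin : ∀ n : ℕ, μ (Set.univ.pi fun _ => Set.Ico (-(n : ℝ)) n) < ⊤)
    (hdom : ∀ A ∈ Box k, m A ≤ μ A)
    (A : ℕ → Set (Fin k → ℝ)) (hA : ∀ n, A n ∈ Box k) (hd : Pairwise (Function.onFun Disjoint A))
    (hU : (⋃ n, A n) ∈ Box k) : m (⋃ n, A n) = ∑' n, m (A n) := by
  classical
  set S := ⋃ n, A n with hSdef
  refine le_antisymm ?_ ?_
  · -- m S ≤ ∑' via tails
    set E : ℕ → Set (Fin k → ℝ) := fun n => S \ ⋃ i < n, A i with hE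
    have hstep : ∀ n : ℕ, m S ≤ ∑ i ∈ Finset.range n, m (A i) + μ (E n) := by
      intro n
      set J : Finset (Set (Fin k → ℝ)) :=
        ((Finset.range n).filter (fun i => A i ≠ ∅)).image A with hJ
      have hJbox : ↑J ⊆ Box k := by
        intro B hB
        simp only [hJ, Finset.coe_image, Set.mem_image, Finset.mem_coe] at hB
        obtain ⟨i, _, rfl⟩ := hB
        exact hA i
      have hJdis : (J : Set (Set (Fin k → ℝ))).PairwiseDisjoint id := by
        intro B hB B' hB' hne
        simp only [hJ, Finset.coe_image, Set.mem_image, Finset.mem_coe] at hB hB'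
        obtain ⟨i, _, rfl⟩ := hB
        obtain ⟨j, _, rfl⟩ := hB'
        exact hd fun h => hne (by rw [h])
      have hJsub : ∀ B ∈ J, B ⊆ S := by
        intro B hB
        simp only [hJ, Finset.mem_image] at hB
        obtain ⟨i, _, rfl⟩ := hB
        exact Set.subset_iUnion A i
      have hkey := addContent_eq_add_disjointOfDiffUnion_of_subset (m := m) (box_semiring k)
        hU hJbox hJsub hJdis
      set D := (box_semiring k).disjointOfDiffUnion hU hJbox with hD
      have hDbox : ↑D ⊆ Box k := (box_semiring k).disjointOfDiffUnion_subset hU hJbox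
      have hDdis : (D : Set (Set (Fin k → ℝ))).PairwiseDisjoint id :=
        (box_semiring k).pairwiseDisjoint_disjointOfDiffUnion hU hJbox
      have hDsU : ⋃₀ ↑D = S \ ⋃₀ ↑J :=
        ((box_semiring k).sdiff_sUnion_eq_sUnion_disjointOfDiffUnion hU hJbox).symm
      have hsumJ : ∑ B ∈ J, m B = ∑ i ∈ Finset.range n, m (A i) := by
        rw [hJ, Finset.sum_image]
        · refine Finset.sum_filter_of_ne fun i _ h => ?_
          intro hAi
          exact h (by rw [hAi, addContent_empty])
        · intro i hi j hj hij
          by_contra hne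
          have := hd hne
          rw [Function.onFun, hij] at this
          exact (Finset.mem_filter.mp hj).2 (by simpa using disjoint_self.mp this)
      have hJU : ⋃₀ ↑J = ⋃ i < n, A i := by
        ext x
        simp only [hJ, Set.mem_sUnion, Finset.mem_coe, Finset.mem_image, Finset.mem_filter,
          Finset.mem_range, Set.mem_iUnion]
        constructor
        · rintro ⟨B, ⟨i, ⟨hi, _⟩, rfl⟩, hx⟩; exact ⟨i, hi, hx⟩
        · rintro ⟨i, hi, hx⟩
          exact ⟨A i, ⟨i, ⟨hi, fun h => by rw [h] at hx; exact hx⟩, rfl⟩, hx⟩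
      have hsumD : ∑ B ∈ D, m B ≤ μ (E n) := by
        have h1 : ∑ B ∈ D, m B ≤ ∑ B ∈ D, μ B :=
          Finset.sum_le_sum fun B hB => hdom B (hDbox hB)
        have h2 : ∑ B ∈ D, μ B = μ (⋃₀ ↑D) := by
          rw [Set.sUnion_eq_biUnion]
          exact (measure_biUnion_finset hDdis fun B hB => box_measurableSet (hDbox hB)).symm
        rw [h2, hDsU, hJU] at h1
        exact h1
      calc m S = ∑ B ∈ J, m B + ∑ B ∈ D, m B := hkey
        _ ≤ ∑ i ∈ Finset.range n, m (A i) + μ (E n) := by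
            rw [hsumJ]; exact add_le_add le_rfl hsumD
    -- the tail tends to zero
    have hEmeas : ∀ n, MeasurableSet (E n) :=
      fun n => (box_measurableSet hU).diff
        (MeasurableSet.biUnion (Set.to_countable _) (fun i _ => box_measurableSet (hA i)))
    have hEanti : Antitone E := by
      intro n p hnp
      exact Set.diff_subset_diff_right (Set.biUnion_subset_biUnion_left fun i hi =>
        lt_of_lt_of_le hi hnp)
    have hEfin : μ (E 0) ≠ ⊤ :=
      (lt_of_le_of_lt (measure_mono Set.diff_subset) (box_measure_lt_top hμfin hU)).ne
    have hEempty : ⋂ n, E n = ∅ := by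
      ext x
      simp only [Set.mem_iInter, Set.mem_empty_iff_false, iff_false, not_forall]
      by_cases hxS : x ∈ S
      · obtain ⟨i, hi⟩ := Set.mem_iUnion.mp hxS
        exact ⟨i + 1, fun h => h.2 (Set.mem_biUnion (Nat.lt_succ_self i) hi)⟩
      · exact ⟨0, fun h => hxS h.1⟩
    have htail : Filter.Tendsto (fun n => μ (E n)) Filter.atTop (nhds 0) := by
      have := tendsto_measure_iInter_atTop (μ := μ)
        (fun n => (hEmeas n).nullMeasurableSet) hEanti ⟨0, hEfin⟩
      rwa [hEempty, measure_empty] at this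
    have hlim : Filter.Tendsto (fun n => ∑ i ∈ Finset.range n, m (A i) + μ (E n))
        Filter.atTop (nhds (∑' n, m (A n) + 0)) :=
      (ENNReal.tendsto_nat_tsum _).add htail
    rw [add_zero] at hlim
    exact ge_of_tendsto hlim (Filter.Eventually.of_forall hstep)
  · rw [ENNReal.tsum_eq_iSup_sum]
    exact iSup_le fun s => box_sum_le m hU A hA hd (fun i => Set.subset_iUnion A i) s

end Sigma

section Sigma2

variable {k : ℕ} {μ : Measure (Fin k → ℝ)} {m : AddContent ENNReal (Box k)}

/-- countable additivity for countably-indexed families. -/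
lemma box_sigma_additive' {ι : Type} [Countable ι]
    (hμfin : ∀ n : ℕ, μ (Set.univ.pi fun _ => Set.Ico (-(n : ℝ)) n) < ⊤)
    (hdom : ∀ A ∈ Box k, m A ≤ μ A)
    (A : ι → Set (Fin k → ℝ)) (hA : ∀ i, A i ∈ Box k) (hd : Pairwise (Function.onFun Disjoint A))
    (hU : (⋃ i, A i) ∈ Box k) : m (⋃ i, A i) = ∑' i, m (A i) := by
  classical
  haveI : Encodable ι := Encodable.ofCountable ι
  set A' : ℕ → Set (Fin k → ℝ) := fun n =>
    if h : ∃ i : ι, Encodable.encode i = n then A h.choose else ∅ with hA'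
  have hA'enc : ∀ i : ι, A' (Encodable.encode i) = A i := by
    intro i
    have h : ∃ j : ι, Encodable.encode j = Encodable.encode i := ⟨i, rfl⟩
    simp only [hA']
    rw [dif_pos h]
    have hci : h.choose = i := Encodable.encode_injective h.choose_spec
    rw [hci]
  have hA'box : ∀ n, A' n ∈ Box k := by
    intro n
    simp only [hA']
    split
    · exact hA _
    · exact box_empty k
  have hA'disj : Pairwise (Function.onFun Disjoint A') := by
    intro p q hpq
    simp only [Function.onFun, hA']
    split
    · split
      · rename_i h1 h2
        refine hd fun heq => hpq ?_
        rw [← h1.choose_spec, ← h2.choose_spec, heq]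
      · simp
    · simp
  have hA'U : ⋃ n, A' n = ⋃ i, A i := by
    ext x
    simp only [Set.mem_iUnion]
    constructor
    · rintro ⟨n, hx⟩
      simp only [hA'] at hx
      split at hx
      · exact ⟨_, hx⟩
      · exact absurd hx (Set.notMem_empty x)
    · rintro ⟨i, hx⟩
      exact ⟨Encodable.encode i, by rw [hA'enc]; exact hx⟩
  have htsum : ∑' n, m (A' n) = ∑' i, m (A i) := by
    rw [← Function.Injective.tsum_eq (f := fun n => m (A' n)) (Encodable.encode_injective (α := ι)) ?_]
    · exact tsum_congr fun i => by rw [hA'enc]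
    · intro n hn
      simp only [Function.mem_support, ne_eq] at hn
      by_contra hr
      apply hn
      simp only [hA']
      rw [dif_neg, addContent_empty]
      rintro ⟨i, hi⟩
      exact hr ⟨i, hi⟩
  rw [← hA'U, ← htsum]
  exact box_sigma_additive hμfin hdom A' hA'box hA'disj (hA'U ▸ hU)

/-- countable subadditivity on boxes. -/
lemma box_sigma_subadditive
    (hμfin : ∀ n : ℕ, μ (Set.univ.pi fun _ => Set.Ico (-(n : ℝ)) n) < ⊤)
    (hdom : ∀ A ∈ Box k, m A ≤ μ A)
    {S : Set (Fin k → ℝ)} (hS : S ∈ Box k) (B : ℕ → Set (Fin k → ℝ))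
    (hB : ∀ n, B n ∈ Box k) (hSB : S ⊆ ⋃ n, B n) : m S ≤ ∑' n, m (B n) := by
  classical
  have hSB' : ∀ n, S ∩ B n ∈ Box k := fun n => box_inter hS (hB n)
  have hIbox : ∀ n : ℕ, ↑((Finset.range n).image B) ⊆ Box k := by
    intro n C hC
    simp only [Finset.coe_image, Set.mem_image, Finset.mem_coe] at hC
    obtain ⟨i, _, rfl⟩ := hC
    exact hB i
  set J : ℕ → Finset (Set (Fin k → ℝ)) :=
    fun n => (box_semiring k).disjointOfDiffUnion (hSB' n) (hIbox n) with hJ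
  have hJbox : ∀ n, ↑(J n) ⊆ Box k := fun n => (box_semiring k).disjointOfDiffUnion_subset _ _
  have hJdis : ∀ n, ((J n : Set (Set (Fin k → ℝ)))).PairwiseDisjoint id :=
    fun n => (box_semiring k).pairwiseDisjoint_disjointOfDiffUnion _ _
  have hJU : ∀ n, ⋃₀ ↑(J n) = (S ∩ B n) \ ⋃ i < n, B i := by
    intro n
    rw [← (box_semiring k).sdiff_sUnion_eq_sUnion_disjointOfDiffUnion (hSB' n) (hIbox n)]
    congr 1
    ext x
    simp only [Set.mem_sUnion, Finset.mem_coe, Finset.coe_image, Finset.mem_image,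
      Finset.mem_range, Set.mem_iUnion]
    constructor
    · rintro ⟨C, ⟨i, hi, rfl⟩, hx⟩; exact ⟨i, by simpa using hi, hx⟩
    · rintro ⟨i, hi, hx⟩; exact ⟨B i, ⟨i, by simpa using hi, rfl⟩, hx⟩
  set ι := (n : ℕ) × {t : Set (Fin k → ℝ) // t ∈ J n} with hι
  set f : ι → Set (Fin k → ℝ) := fun p => (p.2 : Set (Fin k → ℝ)) with hf
  have hfbox : ∀ p : ι, f p ∈ Box k := fun p => hJbox p.1 p.2.2
  have hfsub : ∀ p : ι, f p ⊆ (S ∩ B p.1) \ ⋃ i < p.1, B i := by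
    intro p
    rw [← hJU p.1]
    exact Set.subset_sUnion_of_mem p.2.2
  have hfdisj : Pairwise (Function.onFun Disjoint f) := by
    intro p q hpq
    rcases Nat.lt_trichotomy p.1 q.1 with h | h | h
    · refine Disjoint.mono (hfsub p |>.trans (Set.diff_subset.trans Set.inter_subset_right))
        (hfsub q) ?_
      rw [Set.disjoint_right]
      intro x hx hxB
      exact hx.2 (Set.mem_biUnion h hxB)
    · rcases p with ⟨np, tp⟩
      rcases q with ⟨nq, tq⟩
      dsimp only at h
      subst h
      have hval : (tp : Set (Fin k → ℝ)) ≠ (tq : Set (Fin k → ℝ)) :=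
        fun hval => hpq (congrArg (Sigma.mk np) (Subtype.ext hval))
      exact hJdis np (Finset.mem_coe.mpr tp.2) (Finset.mem_coe.mpr tq.2) hval
    · refine Disjoint.mono (hfsub p)
        (hfsub q |>.trans (Set.diff_subset.trans Set.inter_subset_right)) ?_
      rw [Set.disjoint_left]
      intro x hx hxB
      exact hx.2 (Set.mem_biUnion h hxB)
  have hfU : ⋃ p : ι, f p = S := by
    ext x
    simp only [Set.mem_iUnion]
    constructor
    · rintro ⟨p, hx⟩
      exact ((hfsub p) hx).1.1
    · intro hx
      obtain ⟨n0, hn0⟩ := Set.mem_iUnion.mp (hSB hx)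
      have hex : ∃ n, x ∈ B n := ⟨n0, hn0⟩
      set n := Nat.find hex with hn
      have hxn : x ∈ B n := Nat.find_spec hex
      have hxD : x ∈ (S ∩ B n) \ ⋃ i < n, B i := by
        refine ⟨⟨hx, hxn⟩, ?_⟩
        intro hmem
        obtain ⟨i, hi, hxi⟩ := by simpa using hmem
        exact Nat.find_min hex hi hxi
      rw [← hJU n] at hxD
      obtain ⟨t, ht, hxt⟩ := hxD
      exact ⟨⟨n, ⟨t, ht⟩⟩, hxt⟩
  have hmain : m S = ∑' p : ι, m (f p) := by
    rw [← hfU]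
    exact box_sigma_additive' hμfin hdom f hfbox hfdisj (hfU ▸ hS)
  rw [hmain, ENNReal.tsum_sigma']
  refine ENNReal.tsum_le_tsum fun n => ?_
  rw [Finset.tsum_subtype (J n) (fun t => m t)]
  refine sum_addContent_le_of_subset (box_semiring k) (hJbox n) (hJdis n) (hB n) ?_
  intro t ht
  exact (Set.subset_sUnion_of_mem (by exact_mod_cast ht)).trans
    ((hJU n) ▸ (Set.diff_subset.trans Set.inter_subset_right))

end Sigma2

section Outer
open scoped Classical

variable {k : ℕ} {μ : Measure (Fin k → ℝ)}

/-- The outer measure induced by a content on boxes. -/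
noncomputable def boxOuter (m : AddContent ENNReal (Box k)) : OuterMeasure (Fin k → ℝ) :=
  OuterMeasure.ofFunction (fun s => if s ∈ Box k then m s else ⊤)
    (by simp only [if_pos (box_empty k), addContent_empty])

lemma boxOuter_le_box (m : AddContent ENNReal (Box k)) {A : Set (Fin k → ℝ)} (hA : A ∈ Box k) :
    boxOuter m A ≤ m A :=
  (OuterMeasure.ofFunction_le A).trans_eq (if_pos hA)

lemma boxOuter_box (m : AddContent ENNReal (Box k))
    (hμfin : ∀ n : ℕ, μ (Set.univ.pi fun _ => Set.Ico (-(n : ℝ)) n) < ⊤)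
    (hdom : ∀ A ∈ Box k, m A ≤ μ A)
    {A : Set (Fin k → ℝ)} (hA : A ∈ Box k) : boxOuter m A = m A := by
  refine le_antisymm (boxOuter_le_box m hA) ?_
  rw [boxOuter, OuterMeasure.ofFunction_apply]
  refine le_iInf fun f => le_iInf fun hf => ?_
  by_cases hall : ∀ n, f n ∈ Box k
  · calc m A ≤ ∑' n, m (f n) := box_sigma_subadditive hμfin hdom hA f hall hf
      _ ≤ ∑' n, (if f n ∈ Box k then m (f n) else ⊤) :=
        ENNReal.tsum_le_tsum fun n => (if_pos (hall n)).symm.le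
  · push_neg at hall
    obtain ⟨n, hn⟩ := hall
    exact le_top.trans ((le_of_eq (if_neg hn).symm).trans (ENNReal.le_tsum n))

lemma boxOuter_caratheodory (m : AddContent ENNReal (Box k))
    {A : Set (Fin k → ℝ)} (hA : A ∈ Box k) :
    MeasurableSet[(boxOuter m).caratheodory] A := by
  rw [OuterMeasure.isCaratheodory_iff_le]
  intro t
  conv_rhs => rw [boxOuter, OuterMeasure.ofFunction_apply]
  refine le_iInf fun f => le_iInf fun hf => ?_
  by_cases hall : ∀ n, f n ∈ Box k
  · classical
    have hsingle : ∀ n : ℕ, ↑({f n ∩ A} : Finset (Set (Fin k → ℝ))) ⊆ Box k := by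
      intro n B hB
      simp only [Finset.coe_singleton, Set.mem_singleton_iff] at hB
      exact hB ▸ box_inter (hall n) hA
    set D : ℕ → Finset (Set (Fin k → ℝ)) :=
      fun n => (box_semiring k).disjointOfDiffUnion (hall n) (hsingle n) with hD
    have hDU : ∀ n, ⋃₀ ↑(D n) = f n \ A := by
      intro n
      rw [hD, ← (box_semiring k).sdiff_sUnion_eq_sUnion_disjointOfDiffUnion (hall n) (hsingle n)]
      rw [Finset.coe_singleton, Set.sUnion_singleton, Set.diff_self_inter]
    have hDbox : ∀ n, ↑(D n) ⊆ Box k := fun n => (box_semiring k).disjointOfDiffUnion_subset _ _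
    have h3 : ∀ n, m (f n) = m (f n ∩ A) + ∑ B ∈ D n, m B := by
      intro n
      have := addContent_eq_add_disjointOfDiffUnion_of_subset (m := m) (box_semiring k) (hall n)
        (hsingle n) (by simp) (by simp)
      rwa [Finset.sum_singleton] at this
    have h1 : boxOuter m (t ∩ A) ≤ ∑' n, m (f n ∩ A) := by
      calc boxOuter m (t ∩ A) ≤ boxOuter m (⋃ n, f n ∩ A) := by
            refine measure_mono ?_
            rw [← Set.iUnion_inter]
            exact Set.inter_subset_inter_left A (hf.trans le_rfl)
        _ ≤ ∑' n, boxOuter m (f n ∩ A) := measure_iUnion_le _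
        _ ≤ ∑' n, m (f n ∩ A) :=
            ENNReal.tsum_le_tsum fun n => boxOuter_le_box m (box_inter (hall n) hA)
    have h2 : boxOuter m (t \ A) ≤ ∑' n, ∑ B ∈ D n, m B := by
      calc boxOuter m (t \ A) ≤ boxOuter m (⋃ n, f n \ A) := by
            refine measure_mono ?_
            rw [← Set.iUnion_diff]
            exact Set.diff_subset_diff_left hf
        _ ≤ ∑' n, boxOuter m (f n \ A) := measure_iUnion_le _
        _ ≤ ∑' n, ∑ B ∈ D n, m B := by
            refine ENNReal.tsum_le_tsum fun n => ?_
            rw [← hDU n, Set.sUnion_eq_biUnion]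
            refine (measure_biUnion_finset_le (D n) id).trans ?_
            exact Finset.sum_le_sum fun B hB => boxOuter_le_box m (hDbox n hB)
    calc boxOuter m (t ∩ A) + boxOuter m (t \ A)
        ≤ (∑' n, m (f n ∩ A)) + ∑' n, ∑ B ∈ D n, m B := add_le_add h1 h2
      _ = ∑' n, (m (f n ∩ A) + ∑ B ∈ D n, m B) := (ENNReal.tsum_add).symm
      _ = ∑' n, m (f n) := tsum_congr fun n => (h3 n).symm
      _ ≤ ∑' n, (if f n ∈ Box k then m (f n) else ⊤) :=
        ENNReal.tsum_le_tsum fun n => (if_pos (hall n)).symm.le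
  · push_neg at hall
    obtain ⟨n, hn⟩ := hall
    exact le_top.trans ((le_of_eq (if_neg hn).symm).trans (ENNReal.le_tsum n))

/-- The Borel measure extending a σ-additive content on boxes. -/
noncomputable def boxMeasure (m : AddContent ENNReal (Box k)) : Measure (Fin k → ℝ) :=
  (boxOuter m).toMeasure (by
    refine le_trans (le_of_eq ?_)
      (MeasurableSpace.generateFrom_le fun A hA => boxOuter_caratheodory m hA)
    exact box_generateFrom k)

lemma boxMeasure_box (m : AddContent ENNReal (Box k))
    (hμfin : ∀ n : ℕ, μ (Set.univ.pi fun _ => Set.Ico (-(n : ℝ)) n) < ⊤)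
    (hdom : ∀ A ∈ Box k, m A ≤ μ A)
    {A : Set (Fin k → ℝ)} (hA : A ∈ Box k) : boxMeasure m A = m A := by
  rw [boxMeasure, toMeasure_apply _ _ (box_measurableSet hA)]
  exact boxOuter_box m hμfin hdom hA

lemma box_cover_univ (k : ℕ) :
    ⋃₀ (Set.range fun n : ℕ => Set.univ.pi fun _ : Fin k => Set.Ico (-(n : ℝ)) n) =
      Set.univ := by
  ext x
  simp only [Set.sUnion_range, Set.mem_iUnion, Set.mem_univ, iff_true]
  obtain ⟨n, hn⟩ := exists_nat_ge (∑ i, |x i|)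
  refine ⟨n + 1, fun i _ => ?_⟩
  have hterm : |x i| ≤ ∑ j, |x j| :=
    Finset.single_le_sum (f := fun j => |x j|) (fun j _ => abs_nonneg _) (Finset.mem_univ i)
  simp only [Set.mem_Ico]
  push_cast
  constructor
  · linarith [neg_abs_le (x i)]
  · linarith [le_abs_self (x i)]

lemma box_measure_unique {ρ₁ ρ₂ : Measure (Fin k → ℝ)}
    (h : ∀ A ∈ Box k, ρ₁ A = ρ₂ A) (hfin : ∀ A ∈ Box k, ρ₁ A ≠ ⊤) : ρ₁ = ρ₂ := by
  refine Measure.ext_of_generateFrom_of_cover_subset (box_generateFrom k)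
    (box_semiring k).isPiSystem
    (T := Set.range fun n : ℕ => Set.univ.pi fun _ : Fin k => Set.Ico (-(n : ℝ)) n)
    ?_ (Set.countable_range _) (box_cover_univ k) ?_ h
  · rintro B ⟨n, rfl⟩
    exact box_mk k _ _
  · rintro B ⟨n, rfl⟩
    exact hfin _ (box_mk k _ _)

end Outer

theorem stmt_19 (k : ℕ) (ν : Set (Fin k → ℝ) → ℝ)
    (hν0 : ν ∅ = 0)
    (hνnn : ∀ A ∈ Box k, 0 ≤ ν A)
    (hνadd : ∀ (n : ℕ) (A : Fin n → Set (Fin k → ℝ)),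
      (∀ i, A i ∈ Box k) → Pairwise (Function.onFun Disjoint A) → (⋃ i, A i) ∈ Box k →
      ν (⋃ i, A i) = ∑ i, ν (A i))
    (μ : Measure (Fin k → ℝ))
    (hμfin : ∀ m : ℕ, μ (Set.univ.pi fun _ => Set.Ico (-(m : ℝ)) m) < ⊤)
    (hdom : ∀ A ∈ Box k, ENNReal.ofReal (ν A) ≤ μ A) :
    (∀ A : ℕ → Set (Fin k → ℝ), (∀ n, A n ∈ Box k) → Pairwise (Function.onFun Disjoint A) →
      (⋃ n, A n) ∈ Box k → ν (⋃ n, A n) = ∑' n, ν (A n))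
    ∧ ∃! ρ : Measure (Fin k → ℝ), ∀ A ∈ Box k, ρ A = ENNReal.ofReal (ν A) := by
  set m : AddContent ENNReal (Box k) := boxContent ν hν0 hνnn hνadd with hm
  have hmval : ∀ s, m s = ENNReal.ofReal (ν s) := fun s => rfl
  have hdom' : ∀ A ∈ Box k, m A ≤ μ A := fun A hA => (hmval A).le.trans (hdom A hA)
  constructor
  · intro A hA hd hU
    have hkey := box_sigma_additive (m := m) hμfin hdom' A hA hd hU
    simp only [hmval] at hkey
    have h1 : ν (⋃ n, A n) = (ENNReal.ofReal (ν (⋃ n, A n))).toReal :=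
      (ENNReal.toReal_ofReal (hνnn _ hU)).symm
    rw [h1, hkey, ENNReal.tsum_toReal_eq fun n => ENNReal.ofReal_ne_top]
    exact tsum_congr fun n => ENNReal.toReal_ofReal (hνnn _ (hA n))
  · refine ⟨boxMeasure m, ?_, ?_⟩
    · intro A hA
      rw [boxMeasure_box m hμfin hdom' hA, hmval]
    · intro ρ' hρ'
      refine box_measure_unique (fun A hA => ?_) (fun A hA => ?_)
      · rw [hρ' A hA, boxMeasure_box m hμfin hdom' hA, hmval]
      · rw [hρ' A hA]
        exact ENNReal.ofReal_ne_top
end
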